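/- Let K be a complete nonarchimedean field with ring of integers O = F_q[[π]] and residue field F_q, where |π| = 1/q. Fix an open compact subset S of K and an integer h ≥ 0. Suppose μ assigns to each closed ball B_a(|π|^l) ⊆ S (for all sufficiently large l) and each integer j with 0 ≤ j ≤ h a value ∫_{B_a(|π|^l)} (x−a)^j dμ ∈ C satisfying |∫_{B_a(|π|^l)} (x−a)^j dμ| ≤ C·|π|^{l(j−h)} for a constant C depending only on μ, and μ is finitely additive and compatible with binomial re-expansion. Then for every f of class C^h on S (in the sense of Schikhof difference quotients), the Riemann sums R_l(f,μ,{a_{l,i}}) = ∑_i ∑_{j=0}^h D_j f(a_{l,i}) ∫_{B_i(|π|^l)} (x−a_{l,i})^j dμ converge as l → ∞, and the limit is independent of the choice of sample points a_{l,i} in each ball. -/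

import Mathlib

open Classical

open Finset in
private lemma sum_swap_tri {M : Type*} [AddCommMonoid M] (n : ℕ) (f : ℕ → ℕ → M) :
    ∑ j ∈ range (n + 1), ∑ k ∈ range (j + 1), f j k
      = ∑ k ∈ range (n + 1), ∑ i ∈ range (n - k + 1), f (i + k) k := by
  have h1 : ∑ j ∈ range (n + 1), ∑ k ∈ range (j + 1), f j k
      = ∑ k ∈ range (n + 1), ∑ j ∈ Finset.Ico k (n + 1), f j k := by
    refine Finset.sum_comm' ?_
    intro j k
    simp only [Finset.mem_range, Finset.mem_Ico]
    omega
  rw [h1]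
  refine Finset.sum_congr rfl fun k hk => ?_
  have hk' : k ≤ n := Nat.lt_succ_iff.mp (Finset.mem_range.mp hk)
  rw [Finset.sum_Ico_eq_sum_range]
  have h2 : n + 1 - k = n - k + 1 := by omega
  rw [h2]
  exact Finset.sum_congr rfl fun i _ => by rw [Nat.add_comm k i]

open Finset in
private lemma alg_reassoc {L : Type*} [CommRing L] (h : ℕ) (g : ℕ → L) (c : L) (M : ℕ → L) :
    ∑ j ∈ range (h + 1), g j * (∑ k ∈ range (j + 1), (Nat.choose j k : L) * c ^ (j - k) * M k)
      = ∑ k ∈ range (h + 1),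
          (∑ i ∈ range (h - k + 1), (Nat.choose (i + k) k : L) * c ^ i * g (i + k)) * M k := by
  calc
    ∑ j ∈ range (h + 1), g j * (∑ k ∈ range (j + 1), (Nat.choose j k : L) * c ^ (j - k) * M k)
        = ∑ j ∈ range (h + 1), ∑ k ∈ range (j + 1),
            g j * ((Nat.choose j k : L) * c ^ (j - k) * M k) :=
      Finset.sum_congr rfl fun j _ => Finset.mul_sum _ _ _
    _ = ∑ k ∈ range (h + 1), ∑ i ∈ range (h - k + 1),
          g (i + k) * ((Nat.choose (i + k) k : L) * c ^ (i + k - k) * M k) :=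
      sum_swap_tri h _
    _ = _ := by
      refine Finset.sum_congr rfl fun k _ => ?_
      rw [Finset.sum_mul]
      refine Finset.sum_congr rfl fun i _ => ?_
      rw [Nat.add_sub_cancel]
      ring

private lemma ultra_tele {L : Type*} [SeminormedAddCommGroup L] [IsUltrametricDist L]
    (g : ℕ → L) (E : ℝ) (hE : 0 ≤ E) (N : ℕ)
    (hstep : ∀ i, N ≤ i → ‖g (i + 1) - g i‖ ≤ E) :
    ∀ m, N ≤ m → ‖g m - g N‖ ≤ E := by
  intro m hm
  induction m, hm using Nat.le_induction with
  | base => simpa using hE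
  | succ n hn ih =>
    have hsub : g (n + 1) - g N = (g (n + 1) - g n) + (g n - g N) := by abel
    rw [hsub]
    exact le_trans (IsUltrametricDist.norm_add_le_max _ _) (max_le (hstep n hn) ih)

/-- Riemann sums of a `C^h` function against an `h`-admissible measure
converge, with limit independent of the sample points.  Here `L` is a complete
nonarchimedean field (containing both the compact open set `S` and the values),
`mom l a j` stands for `∫_{B(a,‖π‖^l)} (x-a)^j dμ`, subject to the `h`-admissibility
bound, finite additivity over refinement, and binomial re-centering; `D j` are the
hyperderivatives of `f = D 0`, subject to the `C^h` Taylor property. -/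
theorem stmt8 (L : Type*) [NontriviallyNormedField L] [IsUltrametricDist L] [CompleteSpace L]
    (π : L) (hπ0 : π ≠ 0) (hπ : ‖π‖ < 1)
    (S : Set L) (hSopen : IsOpen S) (hScpt : IsCompact S)
    (l₀ : ℕ) (A : ℕ → Finset L)
    (hcover : ∀ l, l₀ ≤ l → S = ⋃ a ∈ A l, Metric.closedBall a (‖π‖ ^ l))
    (hdisj : ∀ l, l₀ ≤ l → ∀ a ∈ A l, ∀ b ∈ A l, a ≠ b →
      Disjoint (Metric.closedBall a (‖π‖ ^ l)) (Metric.closedBall b (‖π‖ ^ l)))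
    (h : ℕ) (Cμ : ℝ)
    (mom : ℕ → L → ℕ → L)
    (hbound : ∀ l, l₀ ≤ l → ∀ a ∈ S, ∀ j ≤ h,
      ‖mom l a j‖ ≤ Cμ * (‖π‖ ^ l) ^ ((j : ℤ) - (h : ℤ)))
    (hrecenter : ∀ l, l₀ ≤ l → ∀ a b : L, ‖b - a‖ ≤ ‖π‖ ^ l → ∀ j ≤ h,
      mom l a j = ∑ k ∈ Finset.range (j + 1),
        (Nat.choose j k : L) * (b - a) ^ (j - k) * mom l b k)
    (hadd : ∀ l, l₀ ≤ l → ∀ a ∈ A l, ∀ j ≤ h,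
      mom l a j = ∑ b ∈ (A (l + 1)).filter (fun b => b ∈ Metric.closedBall a (‖π‖ ^ l)),
        ∑ k ∈ Finset.range (j + 1),
          (Nat.choose j k : L) * (b - a) ^ (j - k) * mom (l + 1) b k)
    (f : L → L) (D : ℕ → L → L) (hD0 : D 0 = f)
    (hTaylor : ∀ k ≤ h, ∀ ε > (0 : ℝ), ∃ δ > (0 : ℝ), ∀ x ∈ S, ∀ y ∈ S, ‖x - y‖ ≤ δ →
      ‖D k x - ∑ j ∈ Finset.range (h - k + 1),
          (Nat.choose (j + k) k : L) * (x - y) ^ j * D (j + k) y‖ ≤ ε * ‖x - y‖ ^ (h - k)) :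
    ∃ I : L, ∀ sample : ℕ → L → L,
      (∀ l, l₀ ≤ l → ∀ a ∈ A l, sample l a ∈ Metric.closedBall a (‖π‖ ^ l)) →
      Filter.Tendsto
        (fun l => ∑ a ∈ A l, ∑ j ∈ Finset.range (h + 1),
          D j (sample l a) * mom l (sample l a) j)
        Filter.atTop (nhds I) := by
  classical
  have hπpos : (0 : ℝ) < ‖π‖ := norm_pos_iff.mpr hπ0
  set C0 : ℝ := max Cμ 0 * (‖π‖⁻¹) ^ h with hC0def
  have hC0 : 0 ≤ C0 := mul_nonneg (le_max_right _ _) (pow_nonneg (by positivity) _)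
  -- balls are inside S
  have hball : ∀ l, l₀ ≤ l → ∀ a ∈ A l, Metric.closedBall a (‖π‖ ^ l) ⊆ S := by
    intro l hl a ha
    rw [hcover l hl]
    intro x hx
    exact Set.mem_biUnion ha hx
  have hmemS : ∀ l, l₀ ≤ l → ∀ a ∈ A l, a ∈ S := fun l hl a ha =>
    hball l hl a ha (Metric.mem_closedBall_self (by positivity))
  -- uniform Taylor property
  have uniform : ∀ ε : ℝ, 0 < ε → ∃ δ > (0 : ℝ), ∀ k ≤ h, ∀ x ∈ S, ∀ y ∈ S, ‖x - y‖ ≤ δ →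
      ‖D k x - ∑ j ∈ Finset.range (h - k + 1),
          (Nat.choose (j + k) k : L) * (x - y) ^ j * D (j + k) y‖ ≤ ε * ‖x - y‖ ^ (h - k) := by
    intro ε hε
    choose δ hδpos hδ using fun k : Fin (h + 1) =>
      hTaylor k (Nat.lt_succ_iff.mp k.2) ε hε
    have hne : (Finset.univ : Finset (Fin (h + 1))).Nonempty :=
      ⟨⟨0, Nat.succ_pos h⟩, Finset.mem_univ _⟩
    refine ⟨Finset.univ.inf' hne δ, ?_, ?_⟩
    · exact (Finset.lt_inf'_iff hne).mpr fun k _ => hδpos k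
    · intro k hk x hx y hy hxy
      have hle : Finset.univ.inf' hne δ ≤ δ ⟨k, Nat.lt_succ_of_le hk⟩ :=
        Finset.inf'_le _ (Finset.mem_univ _)
      exact hδ ⟨k, Nat.lt_succ_of_le hk⟩ x hx y hy (hxy.trans hle)
  -- core per-ball estimate
  have core : ∀ ε : ℝ, 0 < ε → ∀ δ : ℝ,
      (∀ k ≤ h, ∀ x ∈ S, ∀ y ∈ S, ‖x - y‖ ≤ δ →
        ‖D k x - ∑ j ∈ Finset.range (h - k + 1),
            (Nat.choose (j + k) k : L) * (x - y) ^ j * D (j + k) y‖ ≤ ε * ‖x - y‖ ^ (h - k)) →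
      ∀ l l' : ℕ, l ≤ l' → l' ≤ l + 1 → ‖π‖ ^ l ≤ δ →
      ∀ x ∈ S, ∀ y ∈ S, ‖x - y‖ ≤ ‖π‖ ^ l →
      ∀ M : ℕ → L, (∀ k ≤ h, ‖M k‖ ≤ Cμ * (‖π‖ ^ l') ^ ((k : ℤ) - (h : ℤ))) →
      ‖∑ k ∈ Finset.range (h + 1),
          ((∑ i ∈ Finset.range (h - k + 1),
              (Nat.choose (i + k) k : L) * (x - y) ^ i * D (i + k) y) - D k x) * M k‖
        ≤ ε * C0 := by
    intro ε hε δ hT l l' hll' hl'l hδ x hx y hy hxy M hM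
    refine IsUltrametricDist.norm_sum_le_of_forall_le_of_nonneg
      (mul_nonneg hε.le hC0) ?_
    intro k hk
    have hkh : k ≤ h := Nat.lt_succ_iff.mp (Finset.mem_range.mp hk)
    rw [norm_mul]
    have h1 : ‖(∑ i ∈ Finset.range (h - k + 1),
        (Nat.choose (i + k) k : L) * (x - y) ^ i * D (i + k) y) - D k x‖
        ≤ ε * ‖x - y‖ ^ (h - k) := by
      rw [norm_sub_rev]
      exact hT k hkh x hx y hy (hxy.trans hδ)
    have h2 := hM k hkh
    have hY : (0 : ℝ) ≤ (‖π‖ ^ l') ^ ((k : ℤ) - (h : ℤ)) := by positivity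
    have key : (‖π‖ ^ l) ^ (h - k) * (‖π‖ ^ l') ^ ((k : ℤ) - (h : ℤ))
        ≤ (‖π‖⁻¹) ^ h := by
      have e1 : ((‖π‖ ^ l) ^ (h - k) : ℝ)
          = ‖π‖ ^ (((l * (h - k) : ℕ) : ℤ)) := by
        rw [← pow_mul, zpow_natCast]
      have e2 : ((‖π‖ ^ l') ^ ((k : ℤ) - (h : ℤ)) : ℝ)
          = ‖π‖ ^ ((l' : ℤ) * ((k : ℤ) - (h : ℤ))) := by
        rw [← zpow_natCast (‖π‖) l', ← zpow_mul]
      rw [e1, e2, ← zpow_add₀ (ne_of_gt hπpos)]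
      have e3 : ((‖π‖⁻¹) ^ h : ℝ) = ‖π‖ ^ (-(h : ℤ)) := by
        rw [zpow_neg, ← inv_zpow, zpow_natCast]
      rw [e3]
      apply zpow_le_zpow_right_of_le_one₀ hπpos hπ.le
      have hk' : (k : ℤ) ≤ (h : ℤ) := by exact_mod_cast hkh
      have hnat : ((l * (h - k) : ℕ) : ℤ) = (l : ℤ) * ((h : ℤ) - (k : ℤ)) := by
        push_cast [Nat.cast_sub hkh]
        ring
      rw [hnat]
      have hll : (l : ℤ) ≤ (l' : ℤ) := by exact_mod_cast hll'
      have hl1 : (l' : ℤ) ≤ (l : ℤ) + 1 := by exact_mod_cast hl'l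
      nlinarith [hk', hll, hl1, Int.natCast_nonneg k, Int.natCast_nonneg l]
    calc ‖(∑ i ∈ Finset.range (h - k + 1),
            (Nat.choose (i + k) k : L) * (x - y) ^ i * D (i + k) y) - D k x‖ * ‖M k‖
        ≤ (ε * ‖x - y‖ ^ (h - k)) * (Cμ * (‖π‖ ^ l') ^ ((k : ℤ) - (h : ℤ))) :=
          mul_le_mul h1 h2 (norm_nonneg _) (by positivity)
      _ ≤ (ε * (‖π‖ ^ l) ^ (h - k)) * (max Cμ 0 * (‖π‖ ^ l') ^ ((k : ℤ) - (h : ℤ))) := by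
          have hxx : ε * ‖x - y‖ ^ (h - k) ≤ ε * (‖π‖ ^ l) ^ (h - k) :=
            mul_le_mul_of_nonneg_left (pow_le_pow_left₀ (norm_nonneg _) hxy _) hε.le
          have hyy : Cμ * (‖π‖ ^ l') ^ ((k : ℤ) - (h : ℤ))
              ≤ max Cμ 0 * (‖π‖ ^ l') ^ ((k : ℤ) - (h : ℤ)) :=
            mul_le_mul_of_nonneg_right (le_max_left _ _) hY
          have hfst : (0 : ℝ) ≤ ε * ‖x - y‖ ^ (h - k) := by positivity
          nlinarith [mul_le_mul hxx hyy (le_trans (norm_nonneg (M k)) h2) (by positivity :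
            (0 : ℝ) ≤ ε * (‖π‖ ^ l) ^ (h - k))]
      _ = (ε * max Cμ 0) * ((‖π‖ ^ l) ^ (h - k) * (‖π‖ ^ l') ^ ((k : ℤ) - (h : ℤ))) := by
          ring
      _ ≤ (ε * max Cμ 0) * ((‖π‖⁻¹) ^ h) :=
          mul_le_mul_of_nonneg_left key (by positivity)
      _ = ε * C0 := by rw [hC0def]; ring
  -- recentered expansion of a single-ball term
  have expand : ∀ l, l₀ ≤ l → ∀ x y : L, ‖x - y‖ ≤ ‖π‖ ^ l →
      ∑ j ∈ Finset.range (h + 1), D j y * mom l y j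
        = ∑ k ∈ Finset.range (h + 1),
            (∑ i ∈ Finset.range (h - k + 1),
              (Nat.choose (i + k) k : L) * (x - y) ^ i * D (i + k) y) * mom l x k := by
    intro l hl x y hxy
    have h1 : ∀ j ∈ Finset.range (h + 1), D j y * mom l y j
        = D j y * ∑ k ∈ Finset.range (j + 1),
            (Nat.choose j k : L) * (x - y) ^ (j - k) * mom l x k := by
      intro j hj
      rw [← hrecenter l hl y x hxy j (Nat.lt_succ_iff.mp (Finset.mem_range.mp hj))]
    rw [Finset.sum_congr rfl h1]
    exact alg_reassoc h (fun j => D j y) (x - y) (fun k => mom l x k)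
  -- refinement expansion
  have expand2 : ∀ l, l₀ ≤ l → ∀ a ∈ A l,
      ∑ j ∈ Finset.range (h + 1), D j a * mom l a j
        = ∑ b ∈ (A (l + 1)).filter (fun b => b ∈ Metric.closedBall a (‖π‖ ^ l)),
            ∑ k ∈ Finset.range (h + 1),
              (∑ i ∈ Finset.range (h - k + 1),
                (Nat.choose (i + k) k : L) * (b - a) ^ i * D (i + k) a) * mom (l + 1) b k := by
    intro l hl a ha
    have h1 : ∀ j ∈ Finset.range (h + 1), D j a * mom l a j
        = ∑ b ∈ (A (l + 1)).filter (fun b => b ∈ Metric.closedBall a (‖π‖ ^ l)),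
            D j a * ∑ k ∈ Finset.range (j + 1),
              (Nat.choose j k : L) * (b - a) ^ (j - k) * mom (l + 1) b k := by
      intro j hj
      rw [hadd l hl a ha j (Nat.lt_succ_iff.mp (Finset.mem_range.mp hj)), Finset.mul_sum]
    rw [Finset.sum_congr rfl h1, Finset.sum_comm]
    exact Finset.sum_congr rfl fun b _ =>
      alg_reassoc h (fun j => D j a) (b - a) (fun k => mom (l + 1) b k)
  -- partition of A (l+1) into the fibers over A l
  have hpart : ∀ l, l₀ ≤ l → ∀ g : L → L,
      ∑ b ∈ A (l + 1), g b
        = ∑ a ∈ A l,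
            ∑ b ∈ (A (l + 1)).filter (fun b => b ∈ Metric.closedBall a (‖π‖ ^ l)), g b := by
    intro l hl g
    rw [← Finset.sum_biUnion]
    · apply Finset.sum_congr _ (fun _ _ => rfl)
      apply Finset.ext
      intro b
      simp only [Finset.mem_biUnion, Finset.mem_filter]
      constructor
      · intro hb
        have hbS : b ∈ S := hball (l + 1) (hl.trans (Nat.le_succ l)) b hb
          (Metric.mem_closedBall_self (by positivity))
        rw [hcover l hl] at hbS
        simp only [Set.mem_iUnion, exists_prop] at hbS
        obtain ⟨a, ha, hmem⟩ := hbS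
        exact ⟨a, ha, hb, hmem⟩
      · rintro ⟨a, _, hb, _⟩
        exact hb
    · intro a ha a' ha' hne
      have : Disjoint ((A (l + 1)).filter (fun b => b ∈ Metric.closedBall a (‖π‖ ^ l)))
          ((A (l + 1)).filter (fun b => b ∈ Metric.closedBall a' (‖π‖ ^ l))) := by
        rw [Finset.disjoint_left]
        intro b hb hb'
        rw [Finset.mem_filter] at hb hb'
        exact Set.disjoint_left.mp
          (hdisj l hl a (Finset.mem_coe.mp ha) a' (Finset.mem_coe.mp ha') hne) hb.2 hb'.2
      exact this
  -- center Riemann sums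
  set R : ℕ → L :=
    fun l => ∑ a ∈ A l, ∑ j ∈ Finset.range (h + 1), D j a * mom l a j with hRdef
  -- comparison to sample Riemann sums at the same level
  have hsampdiff : ∀ ε : ℝ, 0 < ε → ∀ δ : ℝ,
      (∀ k ≤ h, ∀ x ∈ S, ∀ y ∈ S, ‖x - y‖ ≤ δ →
        ‖D k x - ∑ j ∈ Finset.range (h - k + 1),
            (Nat.choose (j + k) k : L) * (x - y) ^ j * D (j + k) y‖ ≤ ε * ‖x - y‖ ^ (h - k)) →
      ∀ l, l₀ ≤ l → ‖π‖ ^ l ≤ δ →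
      ∀ s : L → L, (∀ a ∈ A l, s a ∈ Metric.closedBall a (‖π‖ ^ l)) →
      ‖(∑ a ∈ A l, ∑ j ∈ Finset.range (h + 1), D j (s a) * mom l (s a) j) - R l‖
        ≤ ε * C0 := by
    intro ε hε δ hT l hl hδ s hs
    have hRl : R l = ∑ a ∈ A l, ∑ j ∈ Finset.range (h + 1), D j a * mom l a j := rfl
    rw [hRl, ← Finset.sum_sub_distrib]
    refine IsUltrametricDist.norm_sum_le_of_forall_le_of_nonneg
      (mul_nonneg hε.le hC0) ?_
    intro a ha
    have hsa : ‖a - s a‖ ≤ ‖π‖ ^ l := by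
      rw [norm_sub_rev, ← dist_eq_norm]
      exact Metric.mem_closedBall.mp (hs a ha)
    have haS : a ∈ S := hmemS l hl a ha
    have hsaS : s a ∈ S := hball l hl a ha (hs a ha)
    rw [expand l hl a (s a) hsa, ← Finset.sum_sub_distrib]
    have hterm : ∀ k ∈ Finset.range (h + 1),
        (∑ i ∈ Finset.range (h - k + 1),
            (Nat.choose (i + k) k : L) * (a - s a) ^ i * D (i + k) (s a)) * mom l a k
          - D k a * mom l a k
        = ((∑ i ∈ Finset.range (h - k + 1),
            (Nat.choose (i + k) k : L) * (a - s a) ^ i * D (i + k) (s a)) - D k a)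
            * mom l a k := by
      intro k _
      ring
    rw [Finset.sum_congr rfl hterm]
    exact core ε hε δ hT l l le_rfl (Nat.le_succ l) hδ a haS (s a) hsaS hsa
      (fun k => mom l a k) (fun k hk => hbound l hl a haS k hk)
  -- comparison between consecutive levels (with centers)
  have hrefine : ∀ ε : ℝ, 0 < ε → ∀ δ : ℝ,
      (∀ k ≤ h, ∀ x ∈ S, ∀ y ∈ S, ‖x - y‖ ≤ δ →
        ‖D k x - ∑ j ∈ Finset.range (h - k + 1),
            (Nat.choose (j + k) k : L) * (x - y) ^ j * D (j + k) y‖ ≤ ε * ‖x - y‖ ^ (h - k)) →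
      ∀ l, l₀ ≤ l → ‖π‖ ^ l ≤ δ → ‖R (l + 1) - R l‖ ≤ ε * C0 := by
    intro ε hε δ hT l hl hδ
    have hRl : R l = ∑ a ∈ A l, ∑ j ∈ Finset.range (h + 1), D j a * mom l a j := rfl
    have hRsucc : R (l + 1)
        = ∑ a ∈ A (l + 1), ∑ j ∈ Finset.range (h + 1), D j a * mom (l + 1) a j := rfl
    rw [norm_sub_rev, hRl, hRsucc]
    have hL : (∑ a ∈ A l, ∑ j ∈ Finset.range (h + 1), D j a * mom l a j)
        = ∑ a ∈ A l,
            ∑ b ∈ (A (l + 1)).filter (fun b => b ∈ Metric.closedBall a (‖π‖ ^ l)),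
              ∑ k ∈ Finset.range (h + 1),
                (∑ i ∈ Finset.range (h - k + 1),
                  (Nat.choose (i + k) k : L) * (b - a) ^ i * D (i + k) a) * mom (l + 1) b k :=
      Finset.sum_congr rfl fun a ha => expand2 l hl a ha
    have hR : (∑ a ∈ A (l + 1), ∑ j ∈ Finset.range (h + 1), D j a * mom (l + 1) a j)
        = ∑ a ∈ A l,
            ∑ b ∈ (A (l + 1)).filter (fun b => b ∈ Metric.closedBall a (‖π‖ ^ l)),
              ∑ k ∈ Finset.range (h + 1), D k b * mom (l + 1) b k :=
      hpart l hl _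
    rw [hL, hR, ← Finset.sum_sub_distrib]
    refine IsUltrametricDist.norm_sum_le_of_forall_le_of_nonneg
      (mul_nonneg hε.le hC0) ?_
    intro a ha
    rw [← Finset.sum_sub_distrib]
    refine IsUltrametricDist.norm_sum_le_of_forall_le_of_nonneg
      (mul_nonneg hε.le hC0) ?_
    intro b hb
    rw [Finset.mem_filter] at hb
    have hbA : b ∈ A (l + 1) := hb.1
    have hba : ‖b - a‖ ≤ ‖π‖ ^ l := by
      rw [← dist_eq_norm]
      exact Metric.mem_closedBall.mp hb.2
    have haS : a ∈ S := hmemS l hl a ha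
    have hbS : b ∈ S := hmemS (l + 1) (hl.trans (Nat.le_succ l)) b hbA
    rw [← Finset.sum_sub_distrib]
    have hterm : ∀ k ∈ Finset.range (h + 1),
        (∑ i ∈ Finset.range (h - k + 1),
            (Nat.choose (i + k) k : L) * (b - a) ^ i * D (i + k) a) * mom (l + 1) b k
          - D k b * mom (l + 1) b k
        = ((∑ i ∈ Finset.range (h - k + 1),
            (Nat.choose (i + k) k : L) * (b - a) ^ i * D (i + k) a) - D k b)
            * mom (l + 1) b k := by
      intro k _
      ring
    rw [Finset.sum_congr rfl hterm]
    exact core ε hε δ hT l (l + 1) (Nat.le_succ l) le_rfl hδ b hbS a haS hba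
      (fun k => mom (l + 1) b k)
      (fun k hk => hbound (l + 1) (hl.trans (Nat.le_succ l)) b hbS k hk)
  -- smallness of the radii
  have hr0 : Filter.Tendsto (fun l : ℕ => ‖π‖ ^ l) Filter.atTop (nhds 0) :=
    tendsto_pow_atTop_nhds_zero_of_lt_one (norm_nonneg π) hπ
  have smallness : ∀ δ : ℝ, 0 < δ → ∃ N : ℕ, l₀ ≤ N ∧ ∀ l, N ≤ l → ‖π‖ ^ l ≤ δ := by
    intro δ hδ
    have hev : ∀ᶠ l in Filter.atTop, ‖π‖ ^ l < δ := hr0.eventually_lt_const hδ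
    obtain ⟨N, hN⟩ := Filter.eventually_atTop.mp hev
    exact ⟨max N l₀, le_max_right _ _,
      fun l hl => (hN l ((le_max_left _ _).trans hl)).le⟩
  -- R is Cauchy
  have hCauchy : CauchySeq R := by
    rw [Metric.cauchySeq_iff]
    intro ε hε
    set ε' : ℝ := ε / (C0 + 1) with hε'def
    have hε'pos : 0 < ε' := div_pos hε (by linarith)
    have hEC : ε' * C0 < ε := by
      rw [hε'def, div_mul_eq_mul_div, div_lt_iff₀ (by linarith)]
      nlinarith
    obtain ⟨δ, hδpos, hδ⟩ := uniform ε' hε'pos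
    obtain ⟨N, hNl₀, hN⟩ := smallness δ hδpos
    refine ⟨N, fun m hm n hn => ?_⟩
    have step : ∀ i, N ≤ i → ‖R (i + 1) - R i‖ ≤ ε' * C0 := fun i hi =>
      hrefine ε' hε'pos δ hδ i (hNl₀.trans hi) (hN i hi)
    have h1 := ultra_tele R (ε' * C0) (mul_nonneg hε'pos.le hC0) N step m hm
    have h2 := ultra_tele R (ε' * C0) (mul_nonneg hε'pos.le hC0) N step n hn
    have hmn : ‖R m - R n‖ ≤ ε' * C0 := by
      have hsub : R m - R n = (R m - R N) + -(R n - R N) := by abel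
      rw [hsub]
      refine le_trans (IsUltrametricDist.norm_add_le_max _ _) ?_
      rw [norm_neg]
      exact max_le h1 h2
    rw [dist_eq_norm]
    exact lt_of_le_of_lt hmn hEC
  obtain ⟨I, hI⟩ := cauchySeq_tendsto_of_complete hCauchy
  refine ⟨I, fun sample hsample => ?_⟩
  rw [Metric.tendsto_atTop]
  intro ε hε
  set ε' : ℝ := ε / (C0 + 1) with hε'def
  have hε'pos : 0 < ε' := div_pos hε (by linarith)
  have hEC : ε' * C0 < ε := by
    rw [hε'def, div_mul_eq_mul_div, div_lt_iff₀ (by linarith)]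
    nlinarith
  obtain ⟨δ, hδpos, hδ⟩ := uniform ε' hε'pos
  obtain ⟨N, hNl₀, hN⟩ := smallness δ hδpos
  obtain ⟨N₁, hN₁⟩ := (Metric.tendsto_atTop.mp hI) ε hε
  refine ⟨max N N₁, fun l hl => ?_⟩
  have hlN : N ≤ l := (le_max_left _ _).trans hl
  have hlN₁ : N₁ ≤ l := (le_max_right _ _).trans hl
  have hll₀ : l₀ ≤ l := hNl₀.trans hlN
  have hd1 : dist (∑ a ∈ A l, ∑ j ∈ Finset.range (h + 1),
      D j (sample l a) * mom l (sample l a) j) (R l) ≤ ε' * C0 := by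
    rw [dist_eq_norm]
    exact hsampdiff ε' hε'pos δ hδ l hll₀ (hN l hlN) (sample l)
      (fun a ha => hsample l hll₀ a ha)
  calc dist (∑ a ∈ A l, ∑ j ∈ Finset.range (h + 1),
          D j (sample l a) * mom l (sample l a) j) I
      ≤ max (dist (∑ a ∈ A l, ∑ j ∈ Finset.range (h + 1),
          D j (sample l a) * mom l (sample l a) j) (R l)) (dist (R l) I) :=
        IsUltrametricDist.dist_triangle_max _ _ _
    _ < ε := max_lt (lt_of_le_of_lt hd1 hEC) (hN₁ l hlN₁)
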